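/- Let F and G be cyclically symmetric homogeneous polynomials on ℝ^N × ℝ^N of degrees r' and r'' respectively, with seeds f of class D(C_f, σ') and g of class D(C_g, σ''); assume σ' > σ'' and that f^(0) = 0, i.e. f = Σ_{m≥1} f^(m). Then the Poisson bracket H = {F, G} admits a seed h of class D(C_h, σ'') with C_h = 2 e^{−(σ'−σ'')} r' r'' C_f C_g / ((1 − e^{−σ'}) (1 − e^{−(σ'−σ'')})). -/

import Mathlib

open MvPolynomial Finset Real

/-- index set for the `2N` variables: `inl j` ↦ `x_j`, `inr j` ↦ `y_j` (indices mod `N`). -/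
abbrev Idx (N : ℕ) := Fin N ⊕ Fin N

/-- the cyclic shift `τ^s` (`s ∈ ℤ`) acting on polynomials: `τ^s X_j = X_{j+s}`
(indices mod `N`), separately on the `x` and `y` variables, so that
`(τ^s f)(x,y) = f(τ^s x, τ^s y)`. -/
noncomputable def tauPow (N : ℕ) [NeZero N] (s : ℤ) (f : MvPolynomial (Idx N) ℝ) :
    MvPolynomial (Idx N) ℝ :=
  rename (Sum.map (· + (Fin.intCast s : Fin N)) (· + (Fin.intCast s : Fin N))) f

/-- `f ↦ f^⊕ := ∑_{l=1}^N τ^l f`. -/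
noncomputable def oplus (N : ℕ) [NeZero N] (f : MvPolynomial (Idx N) ℝ) :
    MvPolynomial (Idx N) ℝ :=
  ∑ l ∈ Finset.range N, tauPow N ((l : ℤ) + 1) f

/-- the polynomial norm `‖f‖_R`; for a homogeneous polynomial of degree `s` it equals
`R^s ∑_{|j|+|k|=s} |f_{j,k}|`. -/
noncomputable def pnorm {N : ℕ} (R : ℝ) (f : MvPolynomial (Idx N) ℝ) : ℝ :=
  ∑ d ∈ f.support, |f.coeff d| * R ^ (d.sum fun _ e => e)

/-- the Poisson bracket `{f,g} = ∑_j (∂f/∂x_j ∂g/∂y_j − ∂f/∂y_j ∂g/∂x_j)`. -/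
noncomputable def poisson (N : ℕ) (f g : MvPolynomial (Idx N) ℝ) : MvPolynomial (Idx N) ℝ :=
  ∑ j : Fin N,
    (pderiv (Sum.inl j) f * pderiv (Sum.inr j) g - pderiv (Sum.inr j) f * pderiv (Sum.inl j) g)

/-- `p` involves only the sites `0,…,m` (it is left aligned with interaction distance `≤ m`). -/
def SuppIn (N : ℕ) (m : ℕ) (p : MvPolynomial (Idx N) ℝ) : Prop :=
  ∀ d ∈ p.support, ∀ j : Fin N, (d (Sum.inl j) ≠ 0 ∨ d (Sum.inr j) ≠ 0) → (j : ℕ) ≤ m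

/-- the seed `f` is of class `D(C,σ)`: it decomposes as `f = ∑_{m≥0} f^(m)` with each `f^(m)`
left aligned, containing only monomials of interaction distance `≤ m`, and
`‖f^(m)‖₁ ≤ C e^{−σ m}`. -/
def ClassD (N : ℕ) (Cf σ : ℝ) (f : MvPolynomial (Idx N) ℝ) : Prop :=
  ∃ (M : ℕ) (comp : ℕ → MvPolynomial (Idx N) ℝ),
    f = ∑ m ∈ Finset.range M, comp m ∧
    (∀ m, M ≤ m → comp m = 0) ∧
    (∀ m, SuppIn N m (comp m)) ∧
    (∀ m, pnorm 1 (comp m) ≤ Cf * Real.exp (-σ * m))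

/-- class `D(C,σ)` with vanishing `m = 0` component, `f^(0) = 0`. -/
def ClassDzero (N : ℕ) (Cf σ : ℝ) (f : MvPolynomial (Idx N) ℝ) : Prop :=
  ∃ (M : ℕ) (comp : ℕ → MvPolynomial (Idx N) ℝ),
    f = ∑ m ∈ Finset.range M, comp m ∧
    comp 0 = 0 ∧
    (∀ m, M ≤ m → comp m = 0) ∧
    (∀ m, SuppIn N m (comp m)) ∧
    (∀ m, pnorm 1 (comp m) ≤ Cf * Real.exp (-σ * m))

set_option linter.unusedSectionVars false

section Aux
variable {N : ℕ} [NeZero N]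

/-- index shift -/
def sh (a : Fin N) : Idx N → Idx N := Sum.map (· + a) (· + a)

lemma sh_injective (a : Fin N) : Function.Injective (sh a) :=
  Function.Injective.sumMap (add_left_injective a) (add_left_injective a)

lemma sh_comp (a b : Fin N) : sh a ∘ sh b = sh (b + a) := by
  funext x
  cases x <;> simp [sh, add_assoc]

lemma sh_apply_inl (a : Fin N) (j : Fin N) : sh a (Sum.inl j) = Sum.inl (j + a) := rfl
lemma sh_apply_inr (a : Fin N) (j : Fin N) : sh a (Sum.inr j) = Sum.inr (j + a) := rfl

open Fin.CommRing in
lemma tauPow_eq (s : ℤ) (p : MvPolynomial (Idx N) ℝ) :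
    tauPow N s p = rename (sh ((s : Fin N))) p := rfl

/-- ℓ¹ norm of coefficients -/
noncomputable def pn (p : MvPolynomial (Idx N) ℝ) : ℝ := ∑ d ∈ p.support, |p.coeff d|

lemma pnorm_one_eq (p : MvPolynomial (Idx N) ℝ) : pnorm 1 p = pn p := by
  simp [pnorm, pn]

lemma pn_nonneg (p : MvPolynomial (Idx N) ℝ) : 0 ≤ pn p :=
  Finset.sum_nonneg fun _ _ => abs_nonneg _

lemma pn_eq_of_superset {p : MvPolynomial (Idx N) ℝ} {S : Finset ((Idx N) →₀ ℕ)}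
    (h : p.support ⊆ S) : pn p = ∑ d ∈ S, |p.coeff d| := by
  refine Finset.sum_subset h fun d _ hd => ?_
  rw [MvPolynomial.notMem_support_iff] at hd
  simp [hd]

lemma pn_zero : pn (0 : MvPolynomial (Idx N) ℝ) = 0 := by simp [pn]

lemma pn_mono {p q : MvPolynomial (Idx N) ℝ} (h : ∀ d, |q.coeff d| ≤ |p.coeff d|) :
    pn q ≤ pn p := by
  rw [pn_eq_of_superset (Finset.subset_union_left (s₁ := q.support) (s₂ := p.support)),
    pn_eq_of_superset (Finset.subset_union_right (s₁ := q.support) (s₂ := p.support))]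
  exact Finset.sum_le_sum fun d _ => h d

lemma pn_add_le (p q : MvPolynomial (Idx N) ℝ) : pn (p + q) ≤ pn p + pn q := by
  have h1 : (p + q).support ⊆ p.support ∪ q.support := MvPolynomial.support_add
  rw [pn_eq_of_superset h1,
    pn_eq_of_superset (Finset.subset_union_left (s₁ := p.support) (s₂ := q.support)),
    pn_eq_of_superset (Finset.subset_union_right (s₁ := p.support) (s₂ := q.support)),
    ← Finset.sum_add_distrib]
  refine Finset.sum_le_sum fun d _ => ?_
  rw [MvPolynomial.coeff_add]
  exact abs_add_le _ _

lemma pn_neg (p : MvPolynomial (Idx N) ℝ) : pn (-p) = pn p := by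
  simp [pn, MvPolynomial.support_neg]

lemma pn_sub_le (p q : MvPolynomial (Idx N) ℝ) : pn (p - q) ≤ pn p + pn q := by
  rw [sub_eq_add_neg]
  simpa [pn_neg] using pn_add_le p (-q)

lemma pn_sum_le {α : Type*} (s : Finset α) (F : α → MvPolynomial (Idx N) ℝ) :
    pn (∑ i ∈ s, F i) ≤ ∑ i ∈ s, pn (F i) := by
  classical
  induction s using Finset.induction_on with
  | empty => simp [pn_zero]
  | insert a s h ih =>
    rw [Finset.sum_insert h, Finset.sum_insert h]
    exact (pn_add_le _ _).trans (by linarith)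

lemma pn_monomial_le (d : (Idx N) →₀ ℕ) (c : ℝ) : pn (monomial d c) ≤ |c| := by
  have : (monomial d c).support ⊆ {d} := MvPolynomial.support_monomial_subset
  rw [pn_eq_of_superset this]
  simp [MvPolynomial.coeff_monomial]

lemma pn_rename {u : Idx N → Idx N} (hu : Function.Injective u)
    (p : MvPolynomial (Idx N) ℝ) : pn (rename u p) = pn p := by
  classical
  have hsupp : (rename u p).support = p.support.image (Finsupp.mapDomain u) := by
    ext e
    simp only [MvPolynomial.mem_support_iff, Finset.mem_image]
    constructor
    · intro he
      obtain ⟨d, rfl, hd⟩ := MvPolynomial.coeff_rename_ne_zero _ _ _ he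
      exact ⟨d, by simpa [MvPolynomial.mem_support_iff] using hd, rfl⟩
    · rintro ⟨d, hd, rfl⟩
      rw [MvPolynomial.coeff_rename_mapDomain u hu]
      simpa [MvPolynomial.mem_support_iff] using hd
  rw [pn, hsupp, Finset.sum_image (fun a _ b _ h => Finsupp.mapDomain_injective hu h)]
  exact Finset.sum_congr rfl fun d _ => by rw [MvPolynomial.coeff_rename_mapDomain u hu]

lemma pn_mul_monomial (p : MvPolynomial (Idx N) ℝ) (d : (Idx N) →₀ ℕ) (c : ℝ) :
    pn (p * monomial d c) ≤ pn p * |c| := by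
  classical
  have hsupp : (p * monomial d c).support ⊆ p.support.image (· + d) := by
    intro e he
    rw [MvPolynomial.mem_support_iff, MvPolynomial.coeff_mul_monomial'] at he
    split_ifs at he with hle
    · refine Finset.mem_image.2 ⟨e - d, ?_, tsub_add_cancel_of_le hle⟩
      rw [MvPolynomial.mem_support_iff]
      exact fun h0 => he (by rw [h0, zero_mul])
    · exact absurd rfl he
  rw [pn_eq_of_superset hsupp, Finset.sum_image (fun a _ b _ h => by
    exact add_right_cancel h)]
  rw [pn, Finset.sum_mul]
  refine Finset.sum_le_sum fun u _ => ?_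
  rw [MvPolynomial.coeff_mul_monomial, abs_mul]

lemma pn_mul_le (p q : MvPolynomial (Idx N) ℝ) : pn (p * q) ≤ pn p * pn q := by
  classical
  conv_lhs => rw [q.as_sum, Finset.mul_sum]
  refine (pn_sum_le _ _).trans ?_
  have : ∑ d ∈ q.support, pn (p * monomial d (q.coeff d)) ≤
      ∑ d ∈ q.support, pn p * |q.coeff d| :=
    Finset.sum_le_sum fun d _ => pn_mul_monomial p d _
  refine this.trans ?_
  exact le_of_eq (by rw [← Finset.mul_sum]; rfl)

end Aux

section Aux2
variable {N : ℕ} [NeZero N]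

lemma pderiv_eq_sum (v : Idx N) (p : MvPolynomial (Idx N) ℝ) :
    pderiv v p = ∑ d ∈ p.support, monomial (d - Finsupp.single v 1) (p.coeff d * d v) := by
  conv_lhs => rw [p.as_sum]
  rw [map_sum]
  exact Finset.sum_congr rfl fun d _ => MvPolynomial.pderiv_monomial

lemma degree_eq_of_mem {p : MvPolynomial (Idx N) ℝ} {n : ℕ} (hp : p.IsHomogeneous n)
    {d : (Idx N) →₀ ℕ} (hd : d ∈ p.support) : ∑ v : Idx N, d v = n := by
  have h1 : Finsupp.weight 1 d = n := hp (MvPolynomial.mem_support_iff.1 hd)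
  rw [show (1 : Idx N → ℕ) = fun _ => 1 from rfl, ← Finsupp.degree_eq_weight_one] at h1
  rw [← h1, Finsupp.degree_apply]
  exact (Finset.sum_subset (Finset.subset_univ _) fun v _ hv =>
    Finsupp.notMem_support_iff.1 hv).symm

lemma sum_pn_pderiv_le {p : MvPolynomial (Idx N) ℝ} {n : ℕ} (hp : p.IsHomogeneous n) :
    ∑ v : Idx N, pn (pderiv v p) ≤ (n : ℝ) * pn p := by
  have h1 : ∀ v : Idx N, pn (pderiv v p) ≤ ∑ d ∈ p.support, |p.coeff d| * (d v : ℝ) := by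
    intro v
    rw [pderiv_eq_sum v p]
    refine (pn_sum_le _ _).trans (Finset.sum_le_sum fun d _ => ?_)
    refine (pn_monomial_le _ _).trans ?_
    rw [abs_mul]
    simp
  calc ∑ v : Fin N ⊕ Fin N, pn (pderiv v p)
      ≤ ∑ v : Fin N ⊕ Fin N, ∑ d ∈ p.support, |p.coeff d| * (d v : ℝ) :=
        Finset.sum_le_sum fun v _ => h1 v
    _ = ∑ d ∈ p.support, ∑ v : Fin N ⊕ Fin N, |p.coeff d| * (d v : ℝ) := Finset.sum_comm
    _ = ∑ d ∈ p.support, |p.coeff d| * (n : ℝ) := by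
        refine Finset.sum_congr rfl fun d hd => ?_
        rw [← Finset.mul_sum]
        congr 1
        rw [← Nat.cast_sum]
        exact_mod_cast congrArg (fun k : ℕ => (k : ℝ)) (degree_eq_of_mem hp hd)
    _ = (n : ℝ) * pn p := by rw [pn, Finset.mul_sum]; exact Finset.sum_congr rfl fun d _ => mul_comm _ _

lemma pn_poisson_le (p q : MvPolynomial (Idx N) ℝ) :
    pn (poisson N p q) ≤ ∑ j : Fin N,
      (pn (pderiv (Sum.inl j) p) * pn (pderiv (Sum.inr j) q) +
       pn (pderiv (Sum.inr j) p) * pn (pderiv (Sum.inl j) q)) := by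
  refine (pn_sum_le _ _).trans (Finset.sum_le_sum fun j _ => ?_)
  exact (pn_sub_le _ _).trans (add_le_add (pn_mul_le _ _) (pn_mul_le _ _))

lemma pderiv_sh_inl (b j : Fin N) (q : MvPolynomial (Idx N) ℝ) :
    pderiv (Sum.inl j) (MvPolynomial.rename (sh b) q)
      = MvPolynomial.rename (sh b) (pderiv (Sum.inl (j - b)) q) := by
  have h : Sum.inl j = sh b (Sum.inl (j - b)) := by rw [sh_apply_inl, sub_add_cancel]
  rw [h, MvPolynomial.pderiv_rename (sh_injective b)]

lemma pderiv_sh_inr (b j : Fin N) (q : MvPolynomial (Idx N) ℝ) :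
    pderiv (Sum.inr j) (MvPolynomial.rename (sh b) q)
      = MvPolynomial.rename (sh b) (pderiv (Sum.inr (j - b)) q) := by
  have h : Sum.inr j = sh b (Sum.inr (j - b)) := by rw [sh_apply_inr, sub_add_cancel]
  rw [h, MvPolynomial.pderiv_rename (sh_injective b)]

lemma key_sum {p q : MvPolynomial (Idx N) ℝ} {a b : ℕ}
    (hp : p.IsHomogeneous a) (hq : q.IsHomogeneous b) :
    ∑ c : Fin N, pn (poisson N p (MvPolynomial.rename (sh c) q))
      ≤ ((a : ℝ) * (b : ℝ)) * (pn p * pn q) := by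
  set Sx : MvPolynomial (Idx N) ℝ → ℝ := fun r => ∑ j : Fin N, pn (pderiv (Sum.inl j) r) with hSx
  set Sy : MvPolynomial (Idx N) ℝ → ℝ := fun r => ∑ j : Fin N, pn (pderiv (Sum.inr j) r) with hSy
  have hsum : ∀ r : MvPolynomial (Idx N) ℝ, Sx r + Sy r = ∑ v : Fin N ⊕ Fin N, pn (pderiv v r) := by
    intro r
    rw [Fintype.sum_sum_type]
  have step1 : ∑ c : Fin N, pn (poisson N p (MvPolynomial.rename (sh c) q))
      ≤ Sx p * Sy q + Sy p * Sx q := by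
    have hb : ∀ c : Fin N, pn (poisson N p (MvPolynomial.rename (sh c) q))
        ≤ ∑ j : Fin N, (pn (pderiv (Sum.inl j) p) * pn (pderiv (Sum.inr (j - c)) q) +
            pn (pderiv (Sum.inr j) p) * pn (pderiv (Sum.inl (j - c)) q)) := by
      intro c
      refine (pn_poisson_le _ _).trans (le_of_eq (Finset.sum_congr rfl fun j _ => ?_))
      rw [pderiv_sh_inl, pderiv_sh_inr, pn_rename (sh_injective c), pn_rename (sh_injective c)]
    refine (Finset.sum_le_sum fun c (_ : c ∈ Finset.univ) => hb c).trans (le_of_eq ?_)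
    rw [Finset.sum_comm]
    have : ∀ j : Fin N,
        ∑ c : Fin N, (pn (pderiv (Sum.inl j) p) * pn (pderiv (Sum.inr (j - c)) q) +
          pn (pderiv (Sum.inr j) p) * pn (pderiv (Sum.inl (j - c)) q))
        = pn (pderiv (Sum.inl j) p) * Sy q + pn (pderiv (Sum.inr j) p) * Sx q := by
      intro j
      rw [Finset.sum_add_distrib, ← Finset.mul_sum, ← Finset.mul_sum]
      have e1 : ∑ c : Fin N, pn (pderiv (Sum.inr (j - c)) q) = Sy q :=
        Fintype.sum_equiv (Equiv.subLeft j) _ _ fun c => rfl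
      have e2 : ∑ c : Fin N, pn (pderiv (Sum.inl (j - c)) q) = Sx q :=
        Fintype.sum_equiv (Equiv.subLeft j) _ _ fun c => rfl
      rw [e1, e2]
    rw [Finset.sum_congr rfl fun j _ => this j, Finset.sum_add_distrib,
      ← Finset.sum_mul, ← Finset.sum_mul]
  refine step1.trans ?_
  have hxp : 0 ≤ Sx p := Finset.sum_nonneg fun _ _ => pn_nonneg _
  have hyp : 0 ≤ Sy p := Finset.sum_nonneg fun _ _ => pn_nonneg _
  have hxq : 0 ≤ Sx q := Finset.sum_nonneg fun _ _ => pn_nonneg _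
  have hyq : 0 ≤ Sy q := Finset.sum_nonneg fun _ _ => pn_nonneg _
  have h1 : Sx p + Sy p ≤ (a : ℝ) * pn p := by rw [hsum]; exact sum_pn_pderiv_le hp
  have h2 : Sx q + Sy q ≤ (b : ℝ) * pn q := by rw [hsum]; exact sum_pn_pderiv_le hq
  have : Sx p * Sy q + Sy p * Sx q ≤ (Sx p + Sy p) * (Sx q + Sy q) := by nlinarith
  refine this.trans ?_
  calc (Sx p + Sy p) * (Sx q + Sy q) ≤ ((a : ℝ) * pn p) * ((b : ℝ) * pn q) := by
        refine mul_le_mul h1 h2 (by linarith) ?_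
        have := pn_nonneg p
        positivity
    _ = ((a : ℝ) * (b : ℝ)) * (pn p * pn q) := by ring

end Aux2

section Aux3
variable {N : ℕ} [NeZero N]

lemma poisson_sum_left {α : Type*} (s : Finset α) (F : α → MvPolynomial (Idx N) ℝ)
    (q : MvPolynomial (Idx N) ℝ) :
    poisson N (∑ i ∈ s, F i) q = ∑ i ∈ s, poisson N (F i) q := by
  unfold poisson
  rw [Finset.sum_comm]
  refine Finset.sum_congr rfl fun j _ => ?_
  rw [map_sum, map_sum, Finset.sum_mul, Finset.sum_mul, ← Finset.sum_sub_distrib]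

lemma poisson_sum_right {α : Type*} (s : Finset α) (F : α → MvPolynomial (Idx N) ℝ)
    (p : MvPolynomial (Idx N) ℝ) :
    poisson N p (∑ i ∈ s, F i) = ∑ i ∈ s, poisson N p (F i) := by
  unfold poisson
  rw [Finset.sum_comm]
  refine Finset.sum_congr rfl fun j _ => ?_
  rw [map_sum, map_sum, Finset.mul_sum, Finset.mul_sum, ← Finset.sum_sub_distrib]

lemma poisson_zero_left (q : MvPolynomial (Idx N) ℝ) : poisson N 0 q = 0 := by
  unfold poisson
  refine Finset.sum_eq_zero fun j _ => ?_
  simp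

lemma poisson_zero_right (p : MvPolynomial (Idx N) ℝ) : poisson N p 0 = 0 := by
  unfold poisson
  refine Finset.sum_eq_zero fun j _ => ?_
  simp

lemma rename_sh_sh (a b : Fin N) (p : MvPolynomial (Idx N) ℝ) :
    MvPolynomial.rename (sh a) (MvPolynomial.rename (sh b) p)
      = MvPolynomial.rename (sh (b + a)) p := by
  rw [MvPolynomial.rename_rename, sh_comp]

lemma rename_poisson (a : Fin N) (p q : MvPolynomial (Idx N) ℝ) :
    MvPolynomial.rename (sh a) (poisson N p q)
      = poisson N (MvPolynomial.rename (sh a) p) (MvPolynomial.rename (sh a) q) := by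
  unfold poisson
  rw [map_sum]
  refine Fintype.sum_equiv (Equiv.addRight a) _ _ fun j => ?_
  simp only [Equiv.coe_addRight]
  rw [map_sub, map_mul, map_mul, pderiv_sh_inl, pderiv_sh_inr, pderiv_sh_inl, pderiv_sh_inr,
    add_sub_cancel_right]

open Fin.CommRing in
lemma oplus_eq_finsum (p : MvPolynomial (Idx N) ℝ) :
    oplus N p = ∑ b : Fin N, MvPolynomial.rename (sh b) p := by
  unfold oplus
  have hterm : ∀ l : ℕ, tauPow N ((l : ℤ) + 1) p
      = MvPolynomial.rename (sh ((l : Fin N) + 1)) p := by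
    intro l
    have hcast : (((l : ℤ) + 1 : ℤ) : Fin N) = (l : Fin N) + 1 := by
      rw [Int.cast_add, Int.cast_one, Int.cast_natCast]
    rw [tauPow_eq, hcast]
  rw [Finset.sum_congr rfl fun l _ => hterm l]
  refine Finset.sum_nbij' (i := fun l => (l : Fin N) + 1) (j := fun b => (b - 1 : Fin N).val)
    (fun l _ => Finset.mem_univ _) (fun b _ => Finset.mem_range.2 (Fin.is_lt _)) ?_ ?_ ?_
  · intro l hl
    show (((l : Fin N) + 1) - 1).val = l
    rw [add_sub_cancel_right, Fin.val_cast_of_lt (Finset.mem_range.1 hl)]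
  · intro b _
    show ((((b - 1 : Fin N)).val : Fin N) + 1) = b
    rw [Fin.cast_val_eq_self, sub_add_cancel]
  · exact fun l _ => rfl

lemma oplus_rename (a : Fin N) (p : MvPolynomial (Idx N) ℝ) :
    oplus N (MvPolynomial.rename (sh a) p) = oplus N p := by
  rw [oplus_eq_finsum (MvPolynomial.rename (sh a) p), oplus_eq_finsum p]
  refine Fintype.sum_equiv (Equiv.addLeft a) _ _ fun b => ?_
  rw [rename_sh_sh]
  rfl

lemma rename_oplus (a : Fin N) (p : MvPolynomial (Idx N) ℝ) :
    MvPolynomial.rename (sh a) (oplus N p) = oplus N p := by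
  rw [oplus_eq_finsum p, map_sum]
  refine Fintype.sum_equiv (Equiv.addRight a) _ _ fun b => ?_
  rw [rename_sh_sh]
  rfl

lemma oplus_sum {α : Type*} (s : Finset α) (F : α → MvPolynomial (Idx N) ℝ) :
    oplus N (∑ i ∈ s, F i) = ∑ i ∈ s, oplus N (F i) := by
  simp only [oplus_eq_finsum, map_sum]
  rw [Finset.sum_comm]

/-- `j` is a site of `p` -/
def SOf (p : MvPolynomial (Idx N) ℝ) (j : Fin N) : Prop :=
  ∃ d ∈ p.support, d (Sum.inl j) ≠ 0 ∨ d (Sum.inr j) ≠ 0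

lemma suppIn_iff (m : ℕ) (p : MvPolynomial (Idx N) ℝ) :
    SuppIn N m p ↔ ∀ j, SOf p j → (j : ℕ) ≤ m := by
  constructor
  · rintro h j ⟨d, hd, hj⟩; exact h d hd j hj
  · rintro h d hd j hj; exact h j ⟨d, hd, hj⟩

lemma SOf_sum {α : Type*} {s : Finset α} {F : α → MvPolynomial (Idx N) ℝ} {j : Fin N}
    (h : SOf (∑ i ∈ s, F i) j) : ∃ i ∈ s, SOf (F i) j := by
  obtain ⟨d, hd, hj⟩ := h
  rw [MvPolynomial.mem_support_iff, MvPolynomial.coeff_sum] at hd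
  obtain ⟨i, hi, hne⟩ := Finset.exists_ne_zero_of_sum_ne_zero hd
  exact ⟨i, hi, d, MvPolynomial.mem_support_iff.2 hne, hj⟩

lemma SOf_sub {p q : MvPolynomial (Idx N) ℝ} {j : Fin N} (h : SOf (p - q) j) :
    SOf p j ∨ SOf q j := by
  obtain ⟨d, hd, hj⟩ := h
  rw [MvPolynomial.mem_support_iff, MvPolynomial.coeff_sub] at hd
  by_cases hp : p.coeff d = 0
  · right
    exact ⟨d, MvPolynomial.mem_support_iff.2 (fun hq => hd (by rw [hp, hq, sub_zero])), hj⟩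
  · left
    exact ⟨d, MvPolynomial.mem_support_iff.2 hp, hj⟩

lemma SOf_mul {p q : MvPolynomial (Idx N) ℝ} {j : Fin N} (h : SOf (p * q) j) :
    SOf p j ∨ SOf q j := by
  obtain ⟨d, hd, hj⟩ := h
  rw [MvPolynomial.mem_support_iff, MvPolynomial.coeff_mul] at hd
  obtain ⟨x, hx, hne⟩ := Finset.exists_ne_zero_of_sum_ne_zero hd
  rw [Finset.HasAntidiagonal.mem_antidiagonal] at hx
  have h1 : p.coeff x.1 ≠ 0 := fun h0 => hne (by rw [h0, zero_mul])
  have h2 : q.coeff x.2 ≠ 0 := fun h0 => hne (by rw [h0, mul_zero])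
  have hd1 : d (Sum.inl j) = x.1 (Sum.inl j) + x.2 (Sum.inl j) := by
    rw [← hx]; rfl
  have hd2 : d (Sum.inr j) = x.1 (Sum.inr j) + x.2 (Sum.inr j) := by
    rw [← hx]; rfl
  rcases hj with hj | hj
  · rw [hd1] at hj
    by_cases h0 : x.1 (Sum.inl j) = 0
    · exact Or.inr ⟨x.2, MvPolynomial.mem_support_iff.2 h2, Or.inl (by omega)⟩
    · exact Or.inl ⟨x.1, MvPolynomial.mem_support_iff.2 h1, Or.inl h0⟩
  · rw [hd2] at hj
    by_cases h0 : x.1 (Sum.inr j) = 0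
    · exact Or.inr ⟨x.2, MvPolynomial.mem_support_iff.2 h2, Or.inr (by omega)⟩
    · exact Or.inl ⟨x.1, MvPolynomial.mem_support_iff.2 h1, Or.inr h0⟩

lemma SOf_pderiv {v : Idx N} {p : MvPolynomial (Idx N) ℝ} {j : Fin N}
    (h : SOf (pderiv v p) j) : SOf p j := by
  rw [pderiv_eq_sum] at h
  obtain ⟨d, hd, hmon⟩ := SOf_sum h
  obtain ⟨e, he, hj⟩ := hmon
  have hsub : e = d - Finsupp.single v 1 := by
    have := MvPolynomial.support_monomial_subset he
    simpa using this
  subst hsub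
  refine ⟨d, hd, ?_⟩
  rcases hj with hj | hj
  · left
    rw [Finsupp.tsub_apply] at hj
    omega
  · right
    rw [Finsupp.tsub_apply] at hj
    omega

lemma SOf_rename {a : Fin N} {p : MvPolynomial (Idx N) ℝ} {j : Fin N}
    (h : SOf (MvPolynomial.rename (sh a) p) j) : SOf p (j - a) := by
  obtain ⟨d, hd, hj⟩ := h
  rw [MvPolynomial.mem_support_iff] at hd
  obtain ⟨u, hu, hcoeff⟩ := MvPolynomial.coeff_rename_ne_zero _ _ _ hd
  refine ⟨u, MvPolynomial.mem_support_iff.2 hcoeff, ?_⟩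
  subst hu
  have h1 : Finsupp.mapDomain (sh a) u (Sum.inl j) = u (Sum.inl (j - a)) := by
    have : Sum.inl j = sh a (Sum.inl (j - a)) := by rw [sh_apply_inl, sub_add_cancel]
    rw [this, Finsupp.mapDomain_apply (sh_injective a)]
  have h2 : Finsupp.mapDomain (sh a) u (Sum.inr j) = u (Sum.inr (j - a)) := by
    have : Sum.inr j = sh a (Sum.inr (j - a)) := by rw [sh_apply_inr, sub_add_cancel]
    rw [this, Finsupp.mapDomain_apply (sh_injective a)]
  rwa [h1, h2] at hj

lemma SOf_poisson {p q : MvPolynomial (Idx N) ℝ} {j : Fin N}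
    (h : SOf (poisson N p q) j) : SOf p j ∨ SOf q j := by
  unfold poisson at h
  obtain ⟨i, _, hterm⟩ := SOf_sum h
  rcases SOf_sub hterm with hm | hm <;> rcases SOf_mul hm with h' | h'
  · exact Or.inl (SOf_pderiv h')
  · exact Or.inr (SOf_pderiv h')
  · exact Or.inl (SOf_pderiv h')
  · exact Or.inr (SOf_pderiv h')

lemma SOf_of_pderiv_inl {p : MvPolynomial (Idx N) ℝ} {j : Fin N}
    (h : pderiv (Sum.inl j) p ≠ 0) : SOf p j := by
  by_contra hS
  apply h
  rw [pderiv_eq_sum]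
  refine Finset.sum_eq_zero fun d hd => ?_
  have h0 : d (Sum.inl j) = 0 := by
    by_contra h0
    exact hS ⟨d, hd, Or.inl h0⟩
  rw [h0]
  simp

lemma SOf_of_pderiv_inr {p : MvPolynomial (Idx N) ℝ} {j : Fin N}
    (h : pderiv (Sum.inr j) p ≠ 0) : SOf p j := by
  by_contra hS
  apply h
  rw [pderiv_eq_sum]
  refine Finset.sum_eq_zero fun d hd => ?_
  have h0 : d (Sum.inr j) = 0 := by
    by_contra h0
    exact hS ⟨d, hd, Or.inr h0⟩
  rw [h0]
  simp

lemma poisson_common_site {p q : MvPolynomial (Idx N) ℝ} (h : poisson N p q ≠ 0) :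
    ∃ j : Fin N, SOf p j ∧ SOf q j := by
  unfold poisson at h
  obtain ⟨j, _, hterm⟩ := Finset.exists_ne_zero_of_sum_ne_zero h
  refine ⟨j, ?_⟩
  by_cases h1 : pderiv (Sum.inl j) p * pderiv (Sum.inr j) q = 0
  · have h2 : pderiv (Sum.inr j) p * pderiv (Sum.inl j) q ≠ 0 := by
      intro h2
      exact hterm (by rw [h1, h2, sub_zero])
    obtain ⟨ha, hb⟩ := mul_ne_zero_iff.1 h2
    exact ⟨SOf_of_pderiv_inr ha, SOf_of_pderiv_inl hb⟩
  · obtain ⟨ha, hb⟩ := mul_ne_zero_iff.1 h1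
    exact ⟨SOf_of_pderiv_inl ha, SOf_of_pderiv_inr hb⟩

lemma fin_val_add_le (x y : Fin N) : (x + y).val ≤ x.val + y.val := by
  rw [Fin.add_def]
  exact Nat.mod_le _ _

lemma fin_val_sub {x y : Fin N} (h : y.val ≤ x.val) : (x - y).val = x.val - y.val := by
  rw [Fin.sub_def]
  have hx := x.is_lt
  have hy := y.is_lt
  have heq : (N - y.val + x.val) = (x.val - y.val) + N := by omega
  show (N - y.val + x.val) % N = x.val - y.val
  rw [heq, Nat.add_mod_right, Nat.mod_eq_of_lt (by omega)]

end Aux3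

section Aux4
variable {N : ℕ} [NeZero N]

lemma homogComp_self {p : MvPolynomial (Idx N) ℝ} {n : ℕ} (hp : p.IsHomogeneous n) :
    MvPolynomial.homogeneousComponent n p = p := by
  ext d
  rw [MvPolynomial.coeff_homogeneousComponent]
  split_ifs with hdeg
  · rfl
  · by_contra h0
    exact hdeg (by
      rw [Finsupp.degree_eq_weight_one]
      exact hp (fun hc => h0 hc.symm))

lemma suppIn_of_coeff_imp {p q : MvPolynomial (Idx N) ℝ} {m : ℕ}
    (hsub : q.support ⊆ p.support) (hp : SuppIn N m p) : SuppIn N m q :=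
  fun d hd j hj => hp d (hsub hd) j hj

lemma homogComp_support_subset (n : ℕ) (p : MvPolynomial (Idx N) ℝ) :
    (MvPolynomial.homogeneousComponent n p).support ⊆ p.support := by
  intro d hd
  rw [MvPolynomial.mem_support_iff, MvPolynomial.coeff_homogeneousComponent] at hd
  rw [MvPolynomial.mem_support_iff]
  split_ifs at hd with hdeg
  · exact hd
  · exact absurd rfl hd

lemma pn_homogComp_le (n : ℕ) (p : MvPolynomial (Idx N) ℝ) :
    pn (MvPolynomial.homogeneousComponent n p) ≤ pn p := by
  refine pn_mono fun d => ?_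
  rw [MvPolynomial.coeff_homogeneousComponent]
  split_ifs with hdeg
  · exact le_refl _
  · simp [abs_nonneg]

lemma oplus_zero : oplus N (0 : MvPolynomial (Idx N) ℝ) = 0 := by
  rw [oplus_eq_finsum]
  exact Finset.sum_eq_zero fun b _ => by simp

/-- the realigning shift -/
def tsh (m' : ℕ) (b : Fin N) : Fin N := if b.val ≤ m' then 0 else b

/-- the realigned piece `τ^{-t} {p, τ^b q}` -/
noncomputable def piece (p q : MvPolynomial (Idx N) ℝ) (m' : ℕ) (b : Fin N) :
    MvPolynomial (Idx N) ℝ :=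
  MvPolynomial.rename (sh (-(tsh m' b))) (poisson N p (MvPolynomial.rename (sh b) q))

lemma oplus_piece (p q : MvPolynomial (Idx N) ℝ) (m' : ℕ) (b : Fin N) :
    oplus N (piece p q m' b) = oplus N (poisson N p (MvPolynomial.rename (sh b) q)) :=
  oplus_rename _ _

lemma pn_piece (p q : MvPolynomial (Idx N) ℝ) (m' : ℕ) (b : Fin N) :
    pn (piece p q m' b) = pn (poisson N p (MvPolynomial.rename (sh b) q)) :=
  pn_rename (sh_injective _) _

open Fin.CommRing in
lemma piece_suppIn {p q : MvPolynomial (Idx N) ℝ} {m' m'' : ℕ} (b : Fin N)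
    (hp : SuppIn N m' p) (hq : SuppIn N m'' q) :
    SuppIn N (m' + m'') (piece p q m' b) := by
  rw [suppIn_iff]
  intro u hu
  rw [suppIn_iff] at hp hq
  set P := poisson N p (MvPolynomial.rename (sh b) q) with hP
  have hw : SOf P (u - (-(tsh m' b))) := SOf_rename hu
  set w : Fin N := u - (-(tsh m' b)) with hwdef
  have hu_eq : u = w - tsh m' b := by
    rw [hwdef]
    ring
  have hPw := SOf_poisson hw
  by_cases hb : b.val ≤ m'
  · -- no shift
    have ht : tsh m' b = 0 := if_pos hb
    have hu_eq' : u = w := by rw [hu_eq, ht, sub_zero]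
    rcases hPw with hcase | hcase
    · have := hp _ hcase
      rw [hu_eq']
      omega
    · have h2 : SOf q (w - b) := SOf_rename hcase
      have h3 : (w - b).val ≤ m'' := hq _ h2
      have h4 : w = (w - b) + b := by ring
      have h5 : w.val ≤ (w - b).val + b.val := by
        conv_lhs => rw [h4]
        exact fin_val_add_le _ _
      rw [hu_eq']
      omega
  · -- shift by b
    have ht : tsh m' b = b := if_neg hb
    rw [ht] at hu_eq
    -- P is nonzero since it has the site w
    have hPne : P ≠ 0 := by
      obtain ⟨d, hd, -⟩ := hw
      intro h0
      rw [h0] at hd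
      simp at hd
    obtain ⟨j, hjp, hjq⟩ := poisson_common_site hPne
    have hjval : j.val ≤ m' := hp _ hjp
    have hi0 : SOf q (j - b) := SOf_rename hjq
    have hi0val : (j - b).val ≤ m'' := hq _ hi0
    set i0 : Fin N := j - b with hi0def
    have hbeq : b = j - i0 := by rw [hi0def]; ring
    rcases hPw with hcase | hcase
    · -- w is a site of p, w.val ≤ m'
      have hwval : w.val ≤ m' := hp _ hcase
      by_cases hwj : j.val ≤ w.val
      · have hkey : u = i0 + (w - j) := by rw [hu_eq, hbeq]; ring
        have h1 : (w - j).val = w.val - j.val := fin_val_sub hwj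
        have h2 : u.val ≤ i0.val + (w - j).val := by rw [hkey]; exact fin_val_add_le _ _
        omega
      · push_neg at hwj
        have hkey : u = i0 - (j - w) := by rw [hu_eq, hbeq]; ring
        have h1 : (j - w).val = j.val - w.val := fin_val_sub (le_of_lt hwj)
        by_cases hcmp : (j - w).val ≤ i0.val
        · have h2 : u.val = i0.val - (j - w).val := by rw [hkey]; exact fin_val_sub hcmp
          omega
        · push_neg at hcmp
          exfalso
          apply hb
          have hij : i0.val ≤ j.val := by omega
          have h3 : b.val = j.val - i0.val := by rw [hbeq]; exact fin_val_sub hij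
          omega
    · -- w is a site of the shifted q
      have h2 : SOf q (w - b) := SOf_rename hcase
      have h3 : (w - b).val ≤ m'' := hq _ h2
      rw [hu_eq]
      omega

lemma triangle_sum {M : Type*} [AddCommMonoid M] {P : ℕ → ℕ → M} {A B : ℕ}
    (hA : ∀ a b, A ≤ a → P a b = 0) (hB : ∀ a b, B ≤ b → P a b = 0) :
    ∑ m ∈ Finset.range (A + B), ∑ a ∈ Finset.range (m + 1), P a (m - a)
      = ∑ a ∈ Finset.range A, ∑ b ∈ Finset.range B, P a b := by
  set K := A + B with hK
  have step1 : ∑ m ∈ Finset.range K, ∑ a ∈ Finset.range (m + 1), P a (m - a)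
      = ∑ a ∈ Finset.range K, ∑ m ∈ Finset.Ico a K, P a (m - a) := by
    simp only [Finset.range_eq_Ico]
    exact (Finset.sum_Ico_Ico_comm 0 K (fun a m => P a (m - a))).symm
  rw [step1]
  have step2 : ∀ a ∈ Finset.range K, ∑ m ∈ Finset.Ico a K, P a (m - a)
      = ∑ b ∈ Finset.range K, P a b := by
    intro a ha
    rw [Finset.sum_Ico_eq_sum_range]
    have h1 : ∀ i, P a (a + i - a) = P a i := fun i => by rw [Nat.add_sub_cancel_left]
    rw [Finset.sum_congr rfl fun i _ => h1 i]
    refine Finset.sum_subset (Finset.range_subset_range.2 (by omega)) fun b _ hb => ?_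
    rw [Finset.mem_range] at ha
    rw [Finset.mem_range, not_lt] at hb
    rcases le_or_gt A a with h | h
    · exact hA a b h
    · exact hB a b (by omega)
  rw [Finset.sum_congr rfl step2]
  have step3 : ∑ a ∈ Finset.range K, ∑ b ∈ Finset.range K, P a b
      = ∑ a ∈ Finset.range A, ∑ b ∈ Finset.range K, P a b := by
    symm
    refine Finset.sum_subset (Finset.range_subset_range.2 (by omega)) fun a _ ha => ?_
    rw [Finset.mem_range, not_lt] at ha
    exact Finset.sum_eq_zero fun b _ => hA a b ha
  rw [step3]
  refine Finset.sum_congr rfl fun a _ => ?_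
  symm
  refine Finset.sum_subset (Finset.range_subset_range.2 (by omega)) fun b _ hb => ?_
  rw [Finset.mem_range, not_lt] at hb
  exact hB a b hb

end Aux4

section Aux5
variable {N : ℕ} [NeZero N]

lemma suppIn_sum {α : Type*} {s : Finset α} {F : α → MvPolynomial (Idx N) ℝ} {m : ℕ}
    (h : ∀ i ∈ s, SuppIn N m (F i)) : SuppIn N m (∑ i ∈ s, F i) := by
  rw [suppIn_iff]
  intro j hj
  obtain ⟨i, hi, hSi⟩ := SOf_sum hj
  exact (suppIn_iff _ _).1 (h i hi) j hSi

lemma oplus_poisson_right (p g : MvPolynomial (Idx N) ℝ) :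
    oplus N (poisson N p (oplus N g)) = poisson N (oplus N p) (oplus N g) := by
  rw [oplus_eq_finsum (poisson N p (oplus N g))]
  have hc : ∀ c : Fin N, MvPolynomial.rename (sh c) (poisson N p (oplus N g))
      = poisson N (MvPolynomial.rename (sh c) p) (oplus N g) := fun c => by
    rw [rename_poisson, rename_oplus]
  rw [Finset.sum_congr rfl fun c _ => hc c, oplus_eq_finsum p, poisson_sum_left]

lemma geom_bound {z : ℝ} (hz0 : 0 < z) (hz1 : z < 1) (m : ℕ) :
    ∑ i ∈ Finset.range m, z ^ i ≤ 1 / (1 - z) := by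
  rw [geom_sum_eq (ne_of_lt hz1)]
  have h1 : (z ^ m - 1) / (z - 1) = (1 - z ^ m) / (1 - z) := by
    rw [← neg_div_neg_eq]
    ring_nf
  rw [h1]
  rw [div_le_div_iff₀ (by linarith) (by linarith)]
  have : (0:ℝ) ≤ z ^ m := le_of_lt (pow_pos hz0 m)
  nlinarith

end Aux5


/-- Let `F = f^⊕`, `G = g^⊕` be cyclically symmetric homogeneous
polynomials of degrees `r', r''` with seeds `f ∈ D(C_f,σ')`, `g ∈ D(C_g,σ'')`; assume
`σ' > σ''` and `f^(0) = 0`.  Then `{F,G}` admits a seed `h` of class `D(C_h, σ'')` with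
`C_h = 2 e^{−(σ'−σ'')} r' r'' C_f C_g / ((1−e^{−σ'})(1−e^{−(σ'−σ'')}))`. -/
theorem poisson_classD_zero (N : ℕ) [NeZero N]
    (r' r'' : ℕ) (f g : MvPolynomial (Idx N) ℝ)
    (hf : f.IsHomogeneous r') (hg : g.IsHomogeneous r'')
    (Cf Cg σ' σ'' : ℝ) (hCf : 0 < Cf) (hCg : 0 < Cg)
    (hσ'' : 0 < σ'') (hgt : σ'' < σ')
    (hfD : ClassDzero N Cf σ' f) (hgD : ClassD N Cg σ'' g) :
    ∃ h : MvPolynomial (Idx N) ℝ,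
      oplus N h = poisson N (oplus N f) (oplus N g) ∧
      ClassD N
        (2 * Real.exp (-(σ' - σ'')) * r' * r'' * Cf * Cg /
          ((1 - Real.exp (-σ')) * (1 - Real.exp (-(σ' - σ''))))) σ'' h := by
  classical
  obtain ⟨M₁, fc, hfsum, hfc0, hfcM, hfcS, hfcB⟩ := hfD
  obtain ⟨M₂, gc, hgsum, hgcM, hgcS, hgcB⟩ := hgD
  set fh : ℕ → MvPolynomial (Idx N) ℝ :=
    fun m => MvPolynomial.homogeneousComponent r' (fc m) with hfh
  set gh : ℕ → MvPolynomial (Idx N) ℝ :=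
    fun m => MvPolynomial.homogeneousComponent r'' (gc m) with hgh
  have hfh_sum : ∑ m ∈ Finset.range M₁, fh m = f := by
    rw [hfh, ← map_sum, ← hfsum]
    exact homogComp_self hf
  have hgh_sum : ∑ m ∈ Finset.range M₂, gh m = g := by
    rw [hgh, ← map_sum, ← hgsum]
    exact homogComp_self hg
  have hfh0 : fh 0 = 0 := by rw [hfh]; simp only [hfc0, map_zero]
  have hfhM : ∀ m, M₁ ≤ m → fh m = 0 := fun m hm => by
    rw [hfh]; simp only [hfcM m hm, map_zero]
  have hghM : ∀ m, M₂ ≤ m → gh m = 0 := fun m hm => by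
    rw [hgh]; simp only [hgcM m hm, map_zero]
  have hfhS : ∀ m, SuppIn N m (fh m) :=
    fun m => suppIn_of_coeff_imp (homogComp_support_subset _ _) (hfcS m)
  have hghS : ∀ m, SuppIn N m (gh m) :=
    fun m => suppIn_of_coeff_imp (homogComp_support_subset _ _) (hgcS m)
  have hfhB : ∀ m, pn (fh m) ≤ Cf * Real.exp (-σ' * m) := fun m =>
    (pn_homogComp_le _ _).trans (by rw [← pnorm_one_eq]; exact hfcB m)
  have hghB : ∀ m, pn (gh m) ≤ Cg * Real.exp (-σ'' * m) := fun m =>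
    (pn_homogComp_le _ _).trans (by rw [← pnorm_one_eq]; exact hgcB m)
  have hfhH : ∀ m, (fh m).IsHomogeneous r' :=
    fun m => MvPolynomial.homogeneousComponent_isHomogeneous _ _
  have hghH : ∀ m, (gh m).IsHomogeneous r'' :=
    fun m => MvPolynomial.homogeneousComponent_isHomogeneous _ _
  have hpiece0l : ∀ (q : MvPolynomial (Idx N) ℝ) m' b, piece 0 q m' b = 0 := by
    intro q m' b
    unfold piece
    rw [poisson_zero_left, map_zero]
  have hpiece0r : ∀ (p : MvPolynomial (Idx N) ℝ) m' b, piece p 0 m' b = 0 := by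
    intro p m' b
    unfold piece
    rw [map_zero, poisson_zero_right, map_zero]
  set K := M₁ + M₂ with hK
  set comp : ℕ → MvPolynomial (Idx N) ℝ := fun m =>
    ∑ m' ∈ Finset.range (m + 1), ∑ b : Fin N, piece (fh m') (gh (m - m')) m' b with hcomp
  refine ⟨∑ m ∈ Finset.range K, comp m, ?_, ?_⟩
  · -- the seed property
    rw [oplus_sum]
    have e2 : ∀ m, oplus N (comp m) = ∑ m' ∈ Finset.range (m + 1),
        oplus N (poisson N (fh m') (oplus N (gh (m - m')))) := by
      intro m
      rw [hcomp]
      simp only []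
      rw [oplus_sum]
      refine Finset.sum_congr rfl fun m' _ => ?_
      rw [oplus_sum, Finset.sum_congr rfl fun b _ => oplus_piece _ _ _ b,
        ← oplus_sum, ← poisson_sum_right, ← oplus_eq_finsum]
    rw [Finset.sum_congr rfl fun m _ => e2 m]
    have hA : ∀ a b, M₁ ≤ a →
        oplus N (poisson N (fh a) (oplus N (gh b))) = 0 := by
      intro a b ha
      rw [hfhM a ha, poisson_zero_left, oplus_zero]
    have hB : ∀ a b, M₂ ≤ b →
        oplus N (poisson N (fh a) (oplus N (gh b))) = 0 := by
      intro a b hb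
      rw [hghM b hb, oplus_zero, poisson_zero_right, oplus_zero]
    rw [triangle_sum hA hB]
    have inner : ∀ a, ∑ b ∈ Finset.range M₂, oplus N (poisson N (fh a) (oplus N (gh b)))
        = oplus N (poisson N (fh a) (oplus N g)) := by
      intro a
      rw [← oplus_sum, ← poisson_sum_right, ← oplus_sum, hgh_sum]
    rw [Finset.sum_congr rfl fun a _ => inner a]
    rw [Finset.sum_congr rfl fun a _ => oplus_poisson_right (fh a) g,
      ← poisson_sum_left, ← oplus_sum, hfh_sum]
  · -- the class D property
    set z : ℝ := Real.exp (-(σ' - σ'')) with hz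
    set x' : ℝ := Real.exp (-σ') with hx'
    have hz0 : 0 < z := Real.exp_pos _
    have hz1 : z < 1 := by
      rw [hz, Real.exp_lt_one_iff]
      linarith
    have hx'0 : 0 < x' := Real.exp_pos _
    have hx'1 : x' < 1 := by
      rw [hx', Real.exp_lt_one_iff]
      linarith
    set D : ℝ := (r' : ℝ) * (r'' : ℝ) * Cf * Cg with hD
    have hD0 : 0 ≤ D := by positivity
    set Ch : ℝ := 2 * z * r' * r'' * Cf * Cg / ((1 - x') * (1 - z)) with hCh
    refine ⟨K, comp, rfl, ?_, ?_, ?_⟩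
    · -- vanishing
      intro m hm
      rw [hcomp]
      simp only []
      refine Finset.sum_eq_zero fun m' hm' => Finset.sum_eq_zero fun b _ => ?_
      rw [Finset.mem_range] at hm'
      rcases le_or_gt M₁ m' with hc | hc
      · rw [hfhM m' hc, hpiece0l]
      · have : M₂ ≤ m - m' := by omega
        rw [hghM _ this, hpiece0r]
    · -- support
      intro m
      have hsupp : SuppIn N m
          (∑ m' ∈ Finset.range (m + 1), ∑ b : Fin N, piece (fh m') (gh (m - m')) m' b) := by
        refine suppIn_sum fun m' hm' => suppIn_sum fun b _ => ?_
        rw [Finset.mem_range] at hm'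
        have := piece_suppIn b (hfhS m') (hghS (m - m'))
        rwa [Nat.add_sub_cancel' (by omega : m' ≤ m)] at this
      exact hsupp
    · -- the norm bound
      intro m
      rw [pnorm_one_eq]
      set W : ℕ → ℝ := fun m' => if m' = 0 then 0
        else D * (Real.exp (-σ' * m') * Real.exp (-σ'' * ((m - m' : ℕ) : ℝ))) with hW
      have hbound1 : pn (comp m) ≤ ∑ m' ∈ Finset.range (m + 1), W m' := by
        refine (pn_sum_le _ _).trans (Finset.sum_le_sum fun m' _ => ?_)
        by_cases h0 : m' = 0
        · subst h0
          have : ∀ b : Fin N, piece (fh 0) (gh (m - 0)) 0 b = 0 := fun b => by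
            rw [hfh0, hpiece0l]
          rw [Finset.sum_congr rfl fun b _ => this b]
          simp [pn_zero, hW]
        · have step1 : pn (∑ b : Fin N, piece (fh m') (gh (m - m')) m' b)
              ≤ ∑ b : Fin N, pn (poisson N (fh m')
                  (MvPolynomial.rename (sh b) (gh (m - m')))) := by
            refine (pn_sum_le _ _).trans (le_of_eq ?_)
            exact Finset.sum_congr rfl fun b _ => pn_piece _ _ _ b
          refine step1.trans ((key_sum (hfhH m') (hghH (m - m'))).trans ?_)
          rw [hW]
          simp only [h0, if_false]
          have hmul : pn (fh m') * pn (gh (m - m'))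
              ≤ (Cf * Real.exp (-σ' * m')) * (Cg * Real.exp (-σ'' * ((m - m' : ℕ) : ℝ))) := by
            refine mul_le_mul (hfhB m') (hghB (m - m')) (pn_nonneg _) ?_
            positivity
          calc ((r' : ℝ) * (r'' : ℝ)) * (pn (fh m') * pn (gh (m - m')))
              ≤ ((r' : ℝ) * (r'' : ℝ)) *
                ((Cf * Real.exp (-σ' * m')) * (Cg * Real.exp (-σ'' * ((m - m' : ℕ) : ℝ)))) := by
                refine mul_le_mul_of_nonneg_left hmul (by positivity)
            _ = D * (Real.exp (-σ' * m') * Real.exp (-σ'' * ((m - m' : ℕ) : ℝ))) := by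
                rw [hD]; ring
      have hbound2 : ∑ m' ∈ Finset.range (m + 1), W m'
          ≤ D * Real.exp (-σ'' * m) * (z / (1 - z)) := by
        rw [Finset.sum_range_succ']
        have hW0 : W 0 = 0 := by rw [hW]; simp
        rw [hW0, add_zero]
        have hterm : ∀ i ∈ Finset.range m, W (i + 1)
            = D * Real.exp (-σ'' * m) * z ^ (i + 1) := by
          intro i hi
          rw [Finset.mem_range] at hi
          rw [hW]
          simp only [Nat.succ_ne_zero, if_false]
          have hcast : ((m - (i + 1) : ℕ) : ℝ) = (m : ℝ) - ((i : ℝ) + 1) := by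
            rw [Nat.cast_sub (by omega)]
            push_cast
            ring
          rw [hcast]
          have hexp : Real.exp (-σ' * ((i : ℕ) + 1 : ℕ))
              * Real.exp (-σ'' * ((m : ℝ) - ((i : ℝ) + 1)))
              = Real.exp (-σ'' * m) * z ^ (i + 1) := by
            rw [hz, ← Real.exp_nat_mul, ← Real.exp_add, ← Real.exp_add]
            congr 1
            push_cast
            ring
          rw [hexp]
          ring
        rw [Finset.sum_congr rfl hterm]
        have : ∑ i ∈ Finset.range m, D * Real.exp (-σ'' * m) * z ^ (i + 1)
            = D * Real.exp (-σ'' * m) * (z * ∑ i ∈ Finset.range m, z ^ i) := by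
          rw [Finset.mul_sum, Finset.mul_sum]
          refine Finset.sum_congr rfl fun i _ => ?_
          ring
        rw [this]
        refine mul_le_mul_of_nonneg_left ?_ (by positivity)
        rw [div_eq_mul_one_div]
        exact mul_le_mul_of_nonneg_left (geom_bound hz0 hz1 m) (le_of_lt hz0)
      refine (hbound1.trans hbound2).trans ?_
      have hChEq : Ch = (2 / (1 - x')) * (D * (z / (1 - z))) := by
        rw [hCh, hD]
        field_simp
      have h2x : (1 : ℝ) ≤ 2 / (1 - x') := by
        rw [le_div_iff₀ (by linarith)]
        linarith
      calc D * Real.exp (-σ'' * m) * (z / (1 - z))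
          = (D * (z / (1 - z))) * Real.exp (-σ'' * m) := by ring
        _ ≤ ((2 / (1 - x')) * (D * (z / (1 - z)))) * Real.exp (-σ'' * m) := by
            refine mul_le_mul_of_nonneg_right ?_ (le_of_lt (Real.exp_pos _))
            refine le_mul_of_one_le_left ?_ h2x
            exact mul_nonneg hD0 (div_nonneg (le_of_lt hz0) (by linarith))
        _ = Ch * Real.exp (-σ'' * m) := by rw [hChEq]
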